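/- Let f and g be holomorphic modular forms of weights k and l respectively on a subgroup Γ′ of SL₂(ℤ). Then the first Rankin–Cohen bracket [f,g]₁ = k·f·g′ − l·f′·g (with f′ = (1/2πi) df/dτ) is a modular form of weight k+l+2 on Γ′. -/

import Mathlib

open Complex

/-- The open upper half plane, as a subset of `ℂ`. -/
def UpperH : Set ℂ := {z : ℂ | 0 < z.im}

/-- The normalized derivative `D = (1/2πi) d/dτ`. -/
noncomputable def normDeriv (f : ℂ → ℂ) (z : ℂ) : ℂ :=
  (2 * Real.pi * Complex.I)⁻¹ * deriv f z

/-- `f` transforms like a modular form of weight `k` on `Γ′ ⊆ SL₂(ℤ)`. -/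
def WeightKInvariant (Γ' : Subgroup (Matrix.SpecialLinearGroup (Fin 2) ℤ)) (k : ℕ)
    (f : ℂ → ℂ) : Prop :=
  ∀ g ∈ Γ', ∀ z ∈ UpperH,
    f ((g.1 0 0 * z + g.1 0 1) / (g.1 1 0 * z + g.1 1 1)) =
      (g.1 1 0 * z + g.1 1 1) ^ k * f z

lemma upperH_open : IsOpen UpperH := isOpen_lt continuous_const Complex.continuous_im

lemma denom_ne_zero (a b c d : ℝ) (h : a*d - b*c = 1) (z : ℂ) (hz : 0 < z.im) :
    ((c:ℂ)*z + d) ≠ 0 := by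
  intro h0
  have him : c * z.im = 0 := by
    have := congrArg Complex.im h0; simpa using this
  have hc : c = 0 := by
    rcases mul_eq_zero.1 him with h | h
    · exact h
    · exact absurd h (ne_of_gt hz)
  have hd : d = 0 := by
    have := congrArg Complex.re h0
    simpa [hc] using this
  rw [hc, hd] at h; simp at h

lemma moebius_mem (a b c d : ℝ) (h : a*d - b*c = 1) (z : ℂ) (hz : 0 < z.im) :
    0 < (((a:ℂ)*z + b) / ((c:ℂ)*z + d)).im := by
  have hd := denom_ne_zero a b c d h z hz
  have hns : 0 < Complex.normSq ((c:ℂ)*z + d) := Complex.normSq_pos.2 hd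
  have key : (((a:ℂ)*z + b) / ((c:ℂ)*z + d)).im = z.im / Complex.normSq ((c:ℂ)*z + d) := by
    rw [Complex.div_im, div_sub_div_same, div_eq_div_iff (ne_of_gt hns) (ne_of_gt hns)]
    simp only [Complex.add_im, Complex.add_re, Complex.mul_im, Complex.mul_re,
      Complex.ofReal_re, Complex.ofReal_im]
    ring_nf
    linear_combination (z.im * Complex.normSq ((c:ℂ)*z+d)) * h
  rw [key]
  positivity

lemma pow_pred_mul (n : ℕ) (x : ℂ) : (n:ℂ) * x^(n-1) * x = (n:ℂ) * x^n := by
  cases n with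
  | zero => simp
  | succ m => simp [pow_succ]; ring

lemma deriv_transform (a b c d : ℝ) (h : a*d - b*c = 1) (k : ℕ) (f : ℂ → ℂ)
    (hf : DifferentiableOn ℂ f UpperH)
    (hfk : ∀ z ∈ UpperH, f (((a:ℂ)*z+b)/((c:ℂ)*z+d)) = ((c:ℂ)*z+d)^k * f z)
    (z : ℂ) (hz : z ∈ UpperH) :
    deriv f (((a:ℂ)*z+b)/((c:ℂ)*z+d)) =
      (k:ℂ) * c * ((c:ℂ)*z+d)^(k+1) * f z + ((c:ℂ)*z+d)^(k+2) * deriv f z := by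
  have hz' : 0 < z.im := hz
  set j : ℂ := (c:ℂ)*z+d with hjdef
  have hj : j ≠ 0 := denom_ne_zero a b c d h z hz'
  set m : ℂ → ℂ := fun w => ((a:ℂ)*w+b)/((c:ℂ)*w+d) with hmdef
  have hmz : m z ∈ UpperH := moebius_mem a b c d h z hz'
  -- derivative of m
  have hnum : HasDerivAt (fun w : ℂ => (a:ℂ)*w+b) (a:ℂ) z := by
    simpa using ((hasDerivAt_id z).const_mul (a:ℂ)).add_const (b:ℂ)
  have hden : HasDerivAt (fun w : ℂ => (c:ℂ)*w+d) (c:ℂ) z := by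
    simpa using ((hasDerivAt_id z).const_mul (c:ℂ)).add_const (d:ℂ)
  have hm : HasDerivAt m (1 / j^2) z := by
    have := hnum.div hden hj
    have hC : (a:ℂ)*(d:ℂ) - (b:ℂ)*(c:ℂ) = 1 := by exact_mod_cast h
    have hnum1 : (a:ℂ) * ((c:ℂ)*z+d) - ((a:ℂ)*z+b) * (c:ℂ) = 1 := by linear_combination hC
    rw [hnum1] at this
    exact this
  have hfd : DifferentiableAt ℂ f (m z) :=
    hf.differentiableAt (upperH_open.mem_nhds hmz)
  have hfz : DifferentiableAt ℂ f z := hf.differentiableAt (upperH_open.mem_nhds hz)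
  have hcomp : HasDerivAt (f ∘ m) (deriv f (m z) * (1 / j^2)) z :=
    (hfd.hasDerivAt).comp z hm
  have heq : f ∘ m =ᶠ[nhds z] fun w => ((c:ℂ)*w+d)^k * f w := by
    filter_upwards [upperH_open.mem_nhds hz] with w hw
    exact hfk w hw
  have hcomp2 : HasDerivAt (fun w => ((c:ℂ)*w+d)^k * f w) (deriv f (m z) * (1 / j^2)) z :=
    hcomp.congr_of_eventuallyEq heq.symm
  have hdir : HasDerivAt (fun w => ((c:ℂ)*w+d)^k * f w)
      ((k:ℂ) * j^(k-1) * (c:ℂ) * f z + j^k * deriv f z) z := by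
    have h1 : HasDerivAt (fun w : ℂ => ((c:ℂ)*w+d)^k) ((k:ℂ) * j^(k-1) * (c:ℂ)) z := by
      exact hden.pow k
    exact h1.mul hfz.hasDerivAt
  have E := hcomp2.unique hdir
  have E2 : deriv f (m z) = ((k:ℂ) * j^(k-1) * (c:ℂ) * f z + j^k * deriv f z) * j^2 := by
    field_simp at E
    linear_combination E
  show deriv f (m z) = _
  rw [E2]
  linear_combination ((c:ℂ) * f z * j) * pow_pred_mul k j


/-- **The first Rankin–Cohen bracket has weight `k + l + 2`.**
If `f`, `g` are holomorphic modular forms of weights `k`, `l` on a subgroup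
`Γ′ ⊆ SL₂(ℤ)`, then `[f,g]₁ = k·f·g′ − l·f′·g` (with `f′ = (1/2πi) df/dτ`) is a
holomorphic modular form of weight `k + l + 2` on `Γ′`. -/
theorem rankin_cohen_bracket_one (Γ' : Subgroup (Matrix.SpecialLinearGroup (Fin 2) ℤ))
    (k l : ℕ) (f g : ℂ → ℂ)
    (hf : DifferentiableOn ℂ f UpperH) (hg : DifferentiableOn ℂ g UpperH)
    (hfk : WeightKInvariant Γ' k f) (hgl : WeightKInvariant Γ' l g) :
    DifferentiableOn ℂ
        (fun z => (k : ℂ) * f z * normDeriv g z - (l : ℂ) * normDeriv f z * g z)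
        UpperH ∧
      WeightKInvariant Γ' (k + l + 2)
        (fun z => (k : ℂ) * f z * normDeriv g z - (l : ℂ) * normDeriv f z * g z) := by
  have hdf : DifferentiableOn ℂ (deriv f) UpperH :=
    ((hf.analyticOnNhd upperH_open).deriv).differentiableOn
  have hdg : DifferentiableOn ℂ (deriv g) UpperH :=
    ((hg.analyticOnNhd upperH_open).deriv).differentiableOn
  constructor
  · apply DifferentiableOn.sub
    · exact ((differentiableOn_const _).mul hf).mul
        ((differentiableOn_const _).mul hdg)
    · exact ((differentiableOn_const _).mul
        ((differentiableOn_const _).mul hdf)).mul hg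
  · intro γ hγ z hz
    have hdetZ : γ.1 0 0 * γ.1 1 1 - γ.1 0 1 * γ.1 1 0 = 1 := by
      have := γ.2
      rw [Matrix.det_fin_two] at this
      exact this
    have hdet : ((γ.1 0 0 : ℤ):ℝ) * ((γ.1 1 1 : ℤ):ℝ) - ((γ.1 0 1 : ℤ):ℝ) * ((γ.1 1 0 : ℤ):ℝ) = 1 := by
      exact_mod_cast hdetZ
    have hfk' : ∀ w ∈ UpperH,
        f (((((γ.1 0 0 : ℤ):ℝ):ℂ)*w+(((γ.1 0 1 : ℤ):ℝ):ℂ))/((((γ.1 1 0 : ℤ):ℝ):ℂ)*w+(((γ.1 1 1 : ℤ):ℝ):ℂ))) =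
          ((((γ.1 1 0 : ℤ):ℝ):ℂ)*w+(((γ.1 1 1 : ℤ):ℝ):ℂ))^k * f w := by
      intro w hw
      have := hfk γ hγ w hw
      push_cast
      exact this
    have hgl' : ∀ w ∈ UpperH,
        g (((((γ.1 0 0 : ℤ):ℝ):ℂ)*w+(((γ.1 0 1 : ℤ):ℝ):ℂ))/((((γ.1 1 0 : ℤ):ℝ):ℂ)*w+(((γ.1 1 1 : ℤ):ℝ):ℂ))) =
          ((((γ.1 1 0 : ℤ):ℝ):ℂ)*w+(((γ.1 1 1 : ℤ):ℝ):ℂ))^l * g w := by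
      intro w hw
      have := hgl γ hγ w hw
      push_cast
      exact this
    have keyf := deriv_transform _ _ _ _ hdet k f hf hfk' z hz
    have keyg := deriv_transform _ _ _ _ hdet l g hg hgl' z hz
    push_cast at keyf keyg
    have hFf := hfk γ hγ z hz
    have hGg := hgl γ hγ z hz
    simp only [normDeriv]
    rw [hFf, hGg, keyf, keyg]
    ring
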